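/- Let K = ℤ/2 × ℤ/2, identify K̂ with K via the pairing ⟨x,y⟩ = (−1)^{x₁y₁ + x₂y₂}, and use the symmetric bicharacter c(x,y) = (−1)^{x₁y₁ + x₂y₂}. For m⃗ = (m₁,m₂), n⃗ = (n₁,n₂) ∈ ℤ/2 × ℤ/2, let λ_{m⃗,n⃗}(x,y) = (m₁x₁y₁ + n₁x₂y₂, m₂x₁y₁ + n₂x₂y₂) ∈ K. Then there exist ω ∈ C³(K, ℂˣ) and t ∈ C²(K, ℂˣ) such that (λ_{m⃗,n⃗}, ω, t) is a braided zesting datum (i.e. d³(ω) = λ_{m⃗,n⃗} ∧_c λ_{m⃗,n⃗} and equations (BZ2) and (BZ3) hold) if and only if m₂ = 0 and n₁ = 0. -/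

import Mathlib

/-!
Statement 16: for the Klein four-group `K` with the bicharacter and pairing
`(x,y) ↦ (−1)^{x₁y₁ + x₂y₂}`, the symmetric 2-cocycle `λ_{m⃗,n⃗}` admits a
braided zesting datum if and only if `m₂ = 0` and `n₁ = 0`.
-/

namespace Zesting

/-- The Klein four-group. -/
abbrev K := ZMod 2 × ZMod 2

/-- The symmetric bicharacter (and pairing) `(x,y) ↦ (−1)^{x₁y₁ + x₂y₂}`. -/
noncomputable def cK (x y : K) : ℂˣ :=
  (-1 : ℂˣ) ^ (x.1.val * y.1.val + x.2.val * y.2.val)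

/-- `λ_{m⃗,n⃗}(x,y) = (m₁x₁y₁ + n₁x₂y₂, m₂x₁y₁ + n₂x₂y₂)`. -/
def lamMN (m n : K) : K → K → K := fun x y =>
  (m.1 * x.1 * y.1 + n.1 * x.2 * y.2, m.2 * x.1 * y.1 + n.2 * x.2 * y.2)

/-! ### A primitive eighth root of unity in `ℂˣ` -/

noncomputable def zeta : ℂˣ :=
  ⟨Complex.exp (Real.pi * Complex.I / 4), Complex.exp (-(Real.pi * Complex.I / 4)),
   by rw [← Complex.exp_add]; ring_nf; exact Complex.exp_zero,
   by rw [← Complex.exp_add]; ring_nf; exact Complex.exp_zero⟩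

lemma zeta_pow_eight : zeta ^ 8 = 1 := by
  ext
  push_cast [zeta]
  rw [← Complex.exp_nat_mul]
  have : ((8:ℕ):ℂ) * (Real.pi * Complex.I / 4) = 2 * Real.pi * Complex.I := by
    push_cast; ring
  rw [this, Complex.exp_two_pi_mul_I]

lemma zeta_pow_four : zeta ^ 4 = -1 := by
  ext
  push_cast [zeta]
  rw [← Complex.exp_nat_mul]
  have : ((4:ℕ):ℂ) * (Real.pi * Complex.I / 4) = Real.pi * Complex.I := by
    push_cast; ring
  rw [this, Complex.exp_pi_mul_I]

lemma zeta_pow_mod (k : ℕ) : zeta ^ (k % 8) = zeta ^ k := by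
  conv_rhs => rw [← Nat.div_add_mod k 8]
  rw [pow_add, pow_mul, zeta_pow_eight, one_pow, one_mul]

/-- `Zc k = ζ₈^k` for `k : ℤ/8`. -/
noncomputable def Zc (k : ZMod 8) : ℂˣ := zeta ^ k.val

lemma Zc_add (j k : ZMod 8) : Zc (j + k) = Zc j * Zc k := by
  rw [Zc, Zc, Zc, ZMod.val_add, zeta_pow_mod, pow_add]

lemma Zc_natCast (k : ℕ) : Zc (k : ZMod 8) = zeta ^ k := by
  rw [Zc, ZMod.val_natCast, zeta_pow_mod]

lemma cK_Z (x y : K) :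
    cK x y = Zc (4 * ((x.1.val * y.1.val + x.2.val * y.2.val : ℕ) : ZMod 8)) := by
  have : (4 : ZMod 8) * ((x.1.val * y.1.val + x.2.val * y.2.val : ℕ) : ZMod 8)
      = ((4 * (x.1.val * y.1.val + x.2.val * y.2.val) : ℕ) : ZMod 8) := by push_cast; ring
  rw [cK, this, Zc_natCast, pow_mul, zeta_pow_four]

/-! ### Commutative-group cross-multiplication helpers -/

lemma auxE1 (a b c d e f : ℂˣ) (h : a * c * e = f * (b * d)) :
    a * b⁻¹ * c * d⁻¹ * e = f := by
  have h' := congrArg Units.val h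
  simp only [Units.val_mul] at h'
  refine Units.ext ?_
  simp only [Units.val_mul, Units.val_inv_eq_inv_val]
  have hb := b.ne_zero
  have hd := d.ne_zero
  field_simp
  linear_combination h'

lemma auxE2 (a b c p q r : ℂˣ) (h : a * b * r = p * q * c) :
    a * b / c = p * q / r := by
  have h' := congrArg Units.val h
  simp only [Units.val_mul] at h'
  refine Units.ext ?_
  simp only [Units.val_mul, Units.val_div_eq_div_val]
  have hc := c.ne_zero
  have hr := r.ne_zero
  field_simp
  linear_combination h'

lemma auxE3 (f a b c p q r : ℂˣ) (h : f * (c * r) = a * b * (p * q)) :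
    f = a * b / c * (p * q / r) := by
  have h' := congrArg Units.val h
  simp only [Units.val_mul] at h'
  refine Units.ext ?_
  simp only [Units.val_mul, Units.val_div_eq_div_val]
  have hc := c.ne_zero
  have hr := r.ne_zero
  field_simp
  linear_combination h'

/-! ### Explicit exponent tables for the zesting datum -/

def tabA : Fin 4 → Fin 4 → Fin 4 → ZMod 8 :=
  ![![![0,2,4,0],![0,6,6,2],![0,4,4,6],![0,4,2,0]],
    ![![6,0,2,6],![2,0,6,2],![4,0,0,7],![4,0,0,1]],
    ![![4,6,0,4],![2,2,7,0],![4,7,2,3],![6,1,3,5]],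
    ![![0,2,4,0],![6,6,0,1],![2,0,0,1],![0,0,0,2]]]
def tabB : Fin 4 → Fin 4 → Fin 4 → ZMod 8 :=
  ![![![0,2,0,0],![0,6,6,6],![0,0,0,2],![0,0,2,0]],
    ![![6,0,6,6],![2,2,7,1],![0,7,2,0],![0,3,1,5]],
    ![![0,2,0,0],![2,0,0,7],![0,6,0,0],![6,0,0,1]],
    ![![0,2,0,0],![2,2,0,1],![6,0,0,1],![0,0,0,2]]]
def tabTA : Fin 4 → Fin 4 → ZMod 8 :=
  ![![0,0,0,0], ![0,0,0,0], ![0,0,1,2], ![0,0,0,1]]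
def tabTB : Fin 4 → Fin 4 → ZMod 8 :=
  ![![0,0,0,0], ![0,1,0,2], ![0,0,0,0], ![0,0,0,1]]

def ixK (x : K) : Fin 4 :=
  ⟨x.1.val * 2 + x.2.val, by
    have h1 := x.1.val_lt
    have h2 := x.2.val_lt
    omega⟩

def TW (p q : ZMod 2) (x y z : K) : ZMod 8 :=
  (if p = 1 then tabA (ixK x) (ixK y) (ixK z) else 0) +
  (if q = 1 then tabB (ixK x) (ixK y) (ixK z) else 0)

def TT (p q : ZMod 2) (x y : K) : ZMod 8 :=
  (if p = 1 then tabTA (ixK x) (ixK y) else 0) +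
  (if q = 1 then tabTB (ixK x) (ixK y) else 0)

set_option maxRecDepth 4000 in
lemma congE1 : ∀ (p q : ZMod 2) (x y z v : K),
    TW p q y z v + TW p q x (y + z) v + TW p q x y z =
    4 * (((lamMN (p, 0) (0, q) x y).1.val * (lamMN (p, 0) (0, q) z v).1.val +
          (lamMN (p, 0) (0, q) x y).2.val * (lamMN (p, 0) (0, q) z v).2.val : ℕ) : ZMod 8) +
      (TW p q (x + y) z v + TW p q x y (z + v)) := by decide

set_option maxRecDepth 4000 in
lemma congE2 : ∀ (p q : ZMod 2) (x y z : K),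
    TW p q x y z + TW p q y z x + TT p q x (y + z) =
      TT p q x y + TT p q x z + TW p q y x z := by decide

set_option maxRecDepth 4000 in
lemma congE3 : ∀ (p q : ZMod 2) (x y z : K),
    4 * ((z.1.val * (lamMN (p, 0) (0, q) x y).1.val +
          z.2.val * (lamMN (p, 0) (0, q) x y).2.val : ℕ) : ZMod 8) +
      (TW p q x z y + TT p q (x + y) z) =
      TW p q x y z + TW p q z x y + (TT p q x z + TT p q y z) := by decide

/-! ### Generic facts about `lamMN` and `cK` -/

lemma lam_symm (m n : K) (x y : K) : lamMN m n x y = lamMN m n y x := by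
  simp only [lamMN, Prod.mk.injEq]
  constructor <;> ring

lemma lam_cocycle (m n : K) (x y z : K) :
    lamMN m n y z - lamMN m n (x + y) z + lamMN m n x (y + z) - lamMN m n x y = 0 := by
  apply Prod.ext <;>
    simp only [lamMN, Prod.fst_sub, Prod.fst_add, Prod.snd_sub, Prod.snd_add,
      Prod.fst_zero, Prod.snd_zero] <;> ring

lemma lam_zero_left (m n : K) (y : K) : lamMN m n 0 y = 0 := by simp [lamMN]
lemma lam_zero_right (m n : K) (x : K) : lamMN m n x 0 = 0 := by simp [lamMN]
lemma cK_zero_left (y : K) : cK 0 y = 1 := by simp [cK]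
lemma cK_zero_right (x : K) : cK x 0 = 1 := by simp [cK]

/-! ### Sufficiency -/

lemma sufficiency (p q : ZMod 2) :
    ∃ (ω : K → K → K → ℂˣ) (t : K → K → ℂˣ),
      (∀ x y, lamMN (p, 0) (0, q) x y = lamMN (p, 0) (0, q) y x) ∧
      (∀ x y z,
        lamMN (p, 0) (0, q) y z - lamMN (p, 0) (0, q) (x + y) z + lamMN (p, 0) (0, q) x (y + z)
          - lamMN (p, 0) (0, q) x y = 0) ∧
      (∀ x y z v,
        ω y z v * (ω (x + y) z v)⁻¹ * ω x (y + z) v * (ω x y (z + v))⁻¹ * ω x y z =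
          cK (lamMN (p, 0) (0, q) x y) (lamMN (p, 0) (0, q) z v)) ∧
      (∀ x y z,
        ω x y z * ω y z x / ω y x z = t x y * t x z / t x (y + z)) ∧
      (∀ x y z,
        cK z (lamMN (p, 0) (0, q) x y) =
          (ω x y z * ω z x y / ω x z y) * (t x z * t y z / t (x + y) z)) := by
  refine ⟨fun x y z => Zc (TW p q x y z), fun x y => Zc (TT p q x y),
    lam_symm _ _, lam_cocycle _ _, ?_, ?_, ?_⟩
  · intro x y z v
    refine auxE1 _ _ _ _ _ _ ?_
    rw [cK_Z]
    simp only [← Zc_add]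
    exact congrArg Zc (congE1 p q x y z v)
  · intro x y z
    refine auxE2 _ _ _ _ _ _ ?_
    simp only [← Zc_add]
    exact congrArg Zc (congE2 p q x y z)
  · intro x y z
    refine auxE3 _ _ _ _ _ _ _ ?_
    rw [cK_Z]
    simp only [← Zc_add]
    exact congrArg Zc (congE3 p q x y z)

/-! ### Necessity -/

lemma keyLemma (m n : K) (ω : K → K → K → ℂˣ) (t : K → K → ℂˣ)
    (h1 : ∀ x y z v,
        ω y z v * (ω (x + y) z v)⁻¹ * ω x (y + z) v * (ω x y (z + v))⁻¹ * ω x y z =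
          cK (lamMN m n x y) (lamMN m n z v))
    (h2 : ∀ x y z, ω x y z * ω y z x / ω y x z = t x y * t x z / t x (y + z))
    (h3 : ∀ x y z,
        cK z (lamMN m n x y) =
          (ω x y z * ω z x y / ω x z y) * (t x z * t y z / t (x + y) z))
    (g : K) (hgg : g + g = 0) :
    cK (lamMN m n g g) (lamMN m n g g) = cK g (lamMN m n g g) := by
  have i1 := h1 0 0 0 0
  have i2 := h1 g g g g
  have i3 := h2 g 0 g
  have i4 := h2 g g g
  have i5 := h3 0 0 0
  have i6 := h3 0 g g
  have i7 := h3 g g 0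
  have i8 := h3 g g g
  rw [mul_comm (ω 0 g g) (ω g 0 g)] at i6
  simp only [hgg, add_zero, zero_add, lam_zero_left, lam_zero_right, cK_zero_left,
    cK_zero_right, inv_mul_cancel_right, mul_div_cancel_right] at i1 i2 i3 i4 i5 i6 i7 i8
  rw [i1, one_mul] at i5
  rw [← i5, div_one] at i7
  rw [i3] at i6
  refine Units.ext ?_
  have V2 := congrArg Units.val i2
  have V4 := congrArg Units.val i4
  have V6 := congrArg Units.val i6
  have V7 := congrArg Units.val i7
  have V8 := congrArg Units.val i8
  simp only [Units.val_mul, Units.val_div_eq_div_val, Units.val_inv_eq_inv_val,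
    Units.val_one] at V2 V4 V6 V7 V8
  have nz1 := (ω 0 g g).ne_zero
  have nz2 := (ω g 0 g).ne_zero
  have nz3 := (ω g g 0).ne_zero
  have nz4 := (t g 0).ne_zero
  have nz5 := (t 0 g).ne_zero
  have nz6 := (t g g).ne_zero
  rw [← V2, V8]
  field_simp at V4 V6 V7 ⊢
  linear_combination ((ω g g g : ℂ)) * (t 0 g : ℂ) * V7 -
    ((ω g g g : ℂ)) * (t g 0 : ℂ) * (ω 0 g g : ℂ) * (ω g g 0 : ℂ) * V6 +
    (ω 0 g g : ℂ) * (ω g g 0 : ℂ) * V4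

lemma neg_one_ne_one : (-1 : ℂˣ) ≠ 1 := by
  intro h
  have := congrArg Units.val h
  norm_num at this

lemma lam_aa (m n : K) : lamMN m n ((1 : ZMod 2), (0 : ZMod 2)) ((1 : ZMod 2), (0 : ZMod 2)) = m := by
  apply Prod.ext <;> simp [lamMN]

lemma lam_bb (m n : K) : lamMN m n ((0 : ZMod 2), (1 : ZMod 2)) ((0 : ZMod 2), (1 : ZMod 2)) = n := by
  apply Prod.ext <;> simp [lamMN]

lemma extract_a (u : K) (h : cK u u = cK ((1 : ZMod 2), (0 : ZMod 2)) u) : u.2 = 0 := by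
  obtain ⟨a, b⟩ := u
  have h01 : ∀ c : ZMod 2, c = 0 ∨ c = 1 := by decide
  rcases h01 a with ha | ha <;> rcases h01 b with hb | hb <;> subst ha <;> subst hb
  · rfl
  · exfalso
    simp only [cK, ZMod.val_zero, ZMod.val_one] at h
    norm_num at h
  · rfl
  · exfalso
    simp only [cK, ZMod.val_zero, ZMod.val_one] at h
    norm_num at h

lemma extract_b (u : K) (h : cK u u = cK ((0 : ZMod 2), (1 : ZMod 2)) u) : u.1 = 0 := by
  obtain ⟨a, b⟩ := u
  have h01 : ∀ c : ZMod 2, c = 0 ∨ c = 1 := by decide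
  rcases h01 a with ha | ha <;> rcases h01 b with hb | hb <;> subst ha <;> subst hb
  · rfl
  · rfl
  · exfalso
    simp only [cK, ZMod.val_zero, ZMod.val_one] at h
    norm_num at h
  · exfalso
    simp only [cK, ZMod.val_zero, ZMod.val_one] at h
    norm_num at h

/-- There exist `ω ∈ C³(K,ℂˣ)` and `t ∈ C²(K,ℂˣ)` making
`(λ_{m⃗,n⃗}, ω, t)` a braided zesting datum if and only if `m₂ = 0 ∧ n₁ = 0`. -/
theorem statement16 (m n : K) :
    (∃ (ω : K → K → K → ℂˣ) (t : K → K → ℂˣ),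
      (∀ x y, lamMN m n x y = lamMN m n y x) ∧
      (∀ x y z,
        lamMN m n y z - lamMN m n (x + y) z + lamMN m n x (y + z) - lamMN m n x y = 0) ∧
      (∀ x y z v,
        ω y z v * (ω (x + y) z v)⁻¹ * ω x (y + z) v * (ω x y (z + v))⁻¹ * ω x y z =
          cK (lamMN m n x y) (lamMN m n z v)) ∧
      (∀ x y z,
        ω x y z * ω y z x / ω y x z = t x y * t x z / t x (y + z)) ∧
      (∀ x y z,
        cK z (lamMN m n x y) =
          (ω x y z * ω z x y / ω x z y) * (t x z * t y z / t (x + y) z))) ↔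
      (m.2 = 0 ∧ n.1 = 0) := by
  constructor
  · rintro ⟨ω, t, -, -, h1, h2, h3⟩
    have ha := keyLemma m n ω t h1 h2 h3 ((1 : ZMod 2), (0 : ZMod 2)) (by decide)
    have hb := keyLemma m n ω t h1 h2 h3 ((0 : ZMod 2), (1 : ZMod 2)) (by decide)
    rw [lam_aa] at ha
    rw [lam_bb] at hb
    exact ⟨extract_a m ha, extract_b n hb⟩
  · rintro ⟨hm2, hn1⟩
    obtain ⟨m1, m2⟩ := m
    obtain ⟨n1, n2⟩ := n
    have hm2' : m2 = 0 := hm2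
    have hn1' : n1 = 0 := hn1
    subst hm2'
    subst hn1'
    exact sufficiency m1 n2

end Zesting
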